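/- Let A ∈ Z^{d×n} with rank d and ZA = Z^d, c ∈ R^n with Q_c = {y : yA ≤ c} nonempty, and suppose A is a Hilbert basis (NA = cone(A) ∩ Z^d). Suppose there exists a finite set T of integer vectors t = t^+ − t^− with At = 0, c·t > 0 and t^+ ∈ {0,1}^n, such that for every D ∈ N, b ∈ NA, and feasible non-optimal ω of IP_{A,c}(b), some t ∈ T satisfies ω − t ≥ 0. Then for every b ∈ cone(A) ∩ Z^d, the optimal value of min{c·x : Ax = b, x ∈ N^n} equals the optimal value of min{c·x : Ax = b, x ≥ 0}. -/

import Mathlib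

open Finset

def feas {d n : ℕ} (A : Matrix (Fin d) (Fin n) ℤ) (b : Fin d → ℝ) (x : Fin n → ℝ) : Prop :=
  (∀ j, 0 ≤ x j) ∧ ∀ i, ∑ j, (A i j : ℝ) * x j = b i

lemma densAux {m : ℕ} {ι : Type*} [DecidableEq ι] (M : ι → (Fin m → ℚ)) (v : ι → ℚ)
    (s : Finset ι) :
    ∀ (x : Fin m → ℝ), (∀ i ∈ s, ∑ j, (M i j : ℝ) * x j = (v i : ℝ)) →
    ∀ ε : ℝ, 0 < ε → ∃ q : Fin m → ℚ, (∀ i ∈ s, ∑ j, M i j * q j = v i) ∧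
      ∀ j, |(q j : ℝ) - x j| < ε := by
  classical
  induction s using Finset.induction_on with
  | empty =>
      intro x _ ε hε
      have h : ∀ j, ∃ q : ℚ, |x j - (q : ℝ)| < ε := fun j => exists_rat_near (x j) hε
      choose q hq using h
      exact ⟨q, by simp, fun j => by rw [abs_sub_comm]; exact hq j⟩
  | @insert a s ha IH =>
      intro x hx ε hε
      have hxs : ∀ i ∈ s, ∑ j, (M i j : ℝ) * x j = (v i : ℝ) :=
        fun i hi => hx i (mem_insert_of_mem hi)
      have hxa : ∑ j, (M a j : ℝ) * x j = (v a : ℝ) := hx a (mem_insert_self a s)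
      set C : ℝ := ∑ j, |(M a j : ℝ)| with hC
      have hC0 : 0 ≤ C := Finset.sum_nonneg fun j _ => abs_nonneg _
      -- key estimate: if q is within ε' of x coordinatewise then |φ_a q - v a| ≤ C ε'
      have hest : ∀ (q : Fin m → ℚ) (ε' : ℝ), (∀ j, |(q j : ℝ) - x j| ≤ ε') →
          |(↑(∑ j, M a j * q j) : ℝ) - (v a : ℝ)| ≤ C * ε' := by
        intro q ε' hq
        have : (↑(∑ j, M a j * q j) : ℝ) - (v a : ℝ) = ∑ j, (M a j : ℝ) * ((q j : ℝ) - x j) := by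
          rw [← hxa]
          push_cast
          rw [← Finset.sum_sub_distrib]
          congr 1; ext j; ring
        rw [this]
        calc |∑ j, (M a j : ℝ) * ((q j : ℝ) - x j)| ≤ ∑ j, |(M a j : ℝ) * ((q j : ℝ) - x j)| :=
              Finset.abs_sum_le_sum_abs _ _
          _ ≤ ∑ j, |(M a j : ℝ)| * ε' := by
              apply Finset.sum_le_sum
              intro j _
              rw [abs_mul]
              exact mul_le_mul_of_nonneg_left (hq j) (abs_nonneg _)
          _ = C * ε' := by rw [hC, Finset.sum_mul]
      by_cases hA : ∃ q1 q2 : Fin m → ℚ, (∀ i ∈ s, ∑ j, M i j * q1 j = v i) ∧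
          (∀ i ∈ s, ∑ j, M i j * q2 j = v i) ∧ ∑ j, M a j * q1 j ≠ ∑ j, M a j * q2 j
      · obtain ⟨q1, q2, h1, h2, hne⟩ := hA
        set w : Fin m → ℚ := fun j => q1 j - q2 j with hw
        have hwhom : ∀ i ∈ s, ∑ j, M i j * w j = 0 := by
          intro i hi
          simp only [hw, mul_sub, Finset.sum_sub_distrib, h1 i hi, h2 i hi, sub_self]
        have hφw : ∑ j, M a j * w j ≠ 0 := by
          simp only [hw, mul_sub, Finset.sum_sub_distrib]
          exact sub_ne_zero.mpr hne
        set φw : ℚ := ∑ j, M a j * w j with hφwdef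
        have hφwR : (0:ℝ) < |(φw : ℝ)| := by
          rw [abs_pos]
          exact_mod_cast hφw
        set W : ℝ := ∑ j, |(w j : ℝ)| with hW
        have hWb : ∀ j, |(w j : ℝ)| ≤ W :=
          fun j => Finset.single_le_sum (f := fun j => |(w j : ℝ)|)
            (fun j _ => abs_nonneg _) (mem_univ j)
        set K : ℝ := 1 + C * W / |(φw : ℝ)| with hK
        have hK1 : (1:ℝ) ≤ K := by
          rw [hK]
          have : 0 ≤ C * W / |(φw : ℝ)| := by
            apply div_nonneg (mul_nonneg hC0 _) (le_of_lt hφwR)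
            exact Finset.sum_nonneg fun j _ => abs_nonneg _
          linarith
        have hK0 : (0:ℝ) < K := lt_of_lt_of_le one_pos hK1
        obtain ⟨q, hq1, hq2⟩ := IH x hxs (ε / K) (div_pos hε hK0)
        set τ : ℚ := (v a - ∑ j, M a j * q j) / φw with hτ
        refine ⟨fun j => q j + τ * w j, ?_, ?_⟩
        · intro i hi
          rcases Finset.mem_insert.mp hi with rfl | hi
          · have : ∑ j, M i j * (q j + τ * w j)
                = (∑ j, M i j * q j) + τ * ∑ j, M i j * w j := by
              rw [Finset.mul_sum, ← Finset.sum_add_distrib]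
              congr 1; ext j; ring
            rw [this, ← hφwdef, hτ, div_mul_cancel₀ _ hφw]
            ring
          · have : ∑ j, M i j * (q j + τ * w j)
                = (∑ j, M i j * q j) + τ * ∑ j, M i j * w j := by
              rw [Finset.mul_sum, ← Finset.sum_add_distrib]
              congr 1; ext j; ring
            rw [this, hq1 i hi, hwhom i hi, mul_zero, add_zero]
        · intro j
          have hτb : |(τ : ℝ)| ≤ C * (ε / K) / |(φw : ℝ)| := by
            have := hest q (ε / K) (fun j => le_of_lt (hq2 j))
            rw [hτ]
            push_cast
            rw [abs_div]
            gcongr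
            push_cast at this
            rwa [abs_sub_comm]
          calc |(↑(q j + τ * w j) : ℝ) - x j|
              = |((q j : ℝ) - x j) + (τ : ℝ) * (w j : ℝ)| := by push_cast; ring_nf
            _ ≤ |(q j : ℝ) - x j| + |(τ : ℝ) * (w j : ℝ)| := abs_add_le _ _
            _ < ε / K + |(τ : ℝ)| * |(w j : ℝ)| := by
                rw [abs_mul]; exact add_lt_add_left (hq2 j) _
            _ ≤ ε / K + (C * (ε / K) / |(φw : ℝ)|) * W := by
                apply add_le_add_right
                exact mul_le_mul hτb (hWb j) (abs_nonneg _)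
                  (le_trans (abs_nonneg _) hτb)
            _ = (ε / K) * K := by rw [hK]; field_simp
            _ = ε := div_mul_cancel₀ _ (ne_of_gt hK0)
      · push_neg at hA
        obtain ⟨q, hq1, hq2⟩ := IH x hxs ε hε
        have hqa : ∑ j, M a j * q j = v a := by
          by_contra hne
          set η : ℝ := |(↑(∑ j, M a j * q j) : ℝ) - (v a : ℝ)| with hη
          have hη0 : 0 < η := by
            rw [hη, abs_pos, sub_ne_zero]
            exact_mod_cast hne
          obtain ⟨q2, hq21, hq22⟩ := IH x hxs (η / (C + 1)) (div_pos hη0 (by linarith))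
          have heq : ∑ j, M a j * q2 j = ∑ j, M a j * q j := hA q2 q hq21 hq1
          have := hest q2 (η / (C + 1)) (fun j => le_of_lt (hq22 j))
          rw [heq] at this
          have hlt : C * (η / (C + 1)) < η := by
            rw [div_eq_mul_inv, ← mul_assoc]
            have h1 : C * η < (C + 1) * η := by nlinarith
            calc C * η * (C + 1)⁻¹ < (C + 1) * η * (C + 1)⁻¹ := by
                  apply mul_lt_mul_of_pos_right h1
                  positivity
              _ = η := by field_simp
          exact absurd (lt_of_le_of_lt this hlt) (lt_irrefl _ ∘ (hη ▸ ·))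
        refine ⟨q, ?_, hq2⟩
        intro i hi
        rcases Finset.mem_insert.mp hi with rfl | hi
        · exact hqa
        · exact hq1 i hi

theorem stmt18 {d n : ℕ} (A : Matrix (Fin d) (Fin n) ℤ) (c : Fin n → ℝ)
    (hrank : A.rank = d)
    (hlat : ∀ v : Fin d → ℤ, ∃ u : Fin n → ℤ, ∀ i, ∑ j, A i j * u j = v i)
    (hQ : ∃ y : Fin d → ℝ, ∀ j, ∑ i, y i * (A i j : ℝ) ≤ c j)
    -- A is a Hilbert basis
    (hHilb : ∀ b : Fin d → ℤ, (∃ x, feas A (fun i => (b i : ℝ)) x) →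
      ∃ u : Fin n → ℕ, ∀ i, ∑ j, A i j * (u j : ℤ) = b i)
    -- a finite test-set with 0-1 positive parts
    (T : Finset (Fin n → ℤ))
    (hT : ∀ t ∈ T, (∀ i, ∑ j, A i j * t j = 0) ∧ (0 < ∑ j, c j * (t j : ℝ)) ∧ ∀ j, t j ≤ 1)
    (hTest : ∀ u0 : Fin n → ℕ, ∀ ω : Fin n → ℕ,
      (∀ i, ∑ j, A i j * (ω j : ℤ) = ∑ j, A i j * (u0 j : ℤ)) →
      (∃ ω' : Fin n → ℕ, (∀ i, ∑ j, A i j * (ω' j : ℤ) = ∑ j, A i j * (ω j : ℤ)) ∧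
        ∑ j, c j * (ω' j : ℝ) < ∑ j, c j * (ω j : ℝ)) →
      ∃ t ∈ T, ∀ j, t j ≤ (ω j : ℤ)) :
    ∀ b : Fin d → ℤ, (∃ x, feas A (fun i => (b i : ℝ)) x) →
      sInf {v : ℝ | ∃ u : Fin n → ℕ, (∀ i, ∑ j, A i j * (u j : ℤ) = b i) ∧
        v = ∑ j, c j * (u j : ℝ)} =
      sInf {v : ℝ | ∃ x, feas A (fun i => (b i : ℝ)) x ∧ v = ∑ j, c j * x j} := by
  classical
  intro b hbfeas
  obtain ⟨y, hy⟩ := hQ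
  set IP : Set ℝ := {v : ℝ | ∃ u : Fin n → ℕ, (∀ i, ∑ j, A i j * (u j : ℤ) = b i) ∧
      v = ∑ j, c j * (u j : ℝ)} with hIPdef
  set LP : Set ℝ := {v : ℝ | ∃ x, feas A (fun i => (b i : ℝ)) x ∧ v = ∑ j, c j * x j} with hLPdef
  -- lower bound for LP
  have hLPlb : ∀ v ∈ LP, ∑ i, y i * (b i : ℝ) ≤ v := by
    rintro v ⟨x, ⟨hx0, hxA⟩, rfl⟩
    have h1 : ∑ i, y i * (b i : ℝ) = ∑ j, (∑ i, y i * (A i j : ℝ)) * x j := by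
      simp_rw [← hxA, Finset.mul_sum]
      rw [Finset.sum_comm]
      congr 1; ext j
      rw [Finset.sum_mul]
      congr 1; ext i; ring
    rw [h1]
    exact Finset.sum_le_sum fun j _ => mul_le_mul_of_nonneg_right (hy j) (hx0 j)
  have hbddLP : BddBelow LP := ⟨_, hLPlb⟩
  have hsub : IP ⊆ LP := by
    rintro v ⟨u, hu, rfl⟩
    refine ⟨fun j => (u j : ℝ), ⟨fun j => by positivity, fun i => ?_⟩, rfl⟩
    show ∑ j, (A i j : ℝ) * (u j : ℝ) = (b i : ℝ)
    exact_mod_cast hu i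
  have hbddIP : BddBelow IP := hbddLP.mono hsub
  obtain ⟨u₀, hu₀⟩ := hHilb b hbfeas
  have hIPne : IP.Nonempty := ⟨_, u₀, hu₀, rfl⟩
  have hLPne : LP.Nonempty := hIPne.mono hsub
  set L : ℝ := sInf LP with hLdef
  have hL_le : ∀ ω : Fin n → ℕ, (∀ i, ∑ j, A i j * (ω j : ℤ) = b i) →
      L ≤ ∑ j, c j * (ω j : ℝ) :=
    fun ω hω => csInf_le hbddLP (hsub ⟨ω, hω, rfl⟩)
  -- the uniform decrement
  set δ : ℝ := if h : T.Nonempty then T.inf' h (fun t => ∑ j, c j * (t j : ℝ)) else 1 with hδdef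
  have hδ0 : 0 < δ := by
    rw [hδdef]
    split_ifs with h
    · exact (Finset.lt_inf'_iff h).mpr fun t ht => (hT t ht).2.1
    · exact one_pos
  have hδle : ∀ t ∈ T, δ ≤ ∑ j, c j * (t j : ℝ) := by
    intro t ht
    rw [hδdef, dif_pos ⟨t, ht⟩]
    exact Finset.inf'_le _ ht
  -- rational feasible point with value below any non-LP-optimal integer point
  have key : ∀ ω : Fin n → ℕ, L < ∑ j, c j * (ω j : ℝ) →
      ∃ q : Fin n → ℚ, (∀ j, 0 ≤ q j) ∧ (∀ i, ∑ j, (A i j : ℚ) * q j = (b i : ℚ)) ∧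
        ∑ j, c j * ((q j : ℚ) : ℝ) < ∑ j, c j * (ω j : ℝ) := by
    intro ω hω
    obtain ⟨v, hvLP, hvlt⟩ := exists_lt_of_csInf_lt hLPne hω
    obtain ⟨x, ⟨hx0, hxA⟩, rfl⟩ := hvLP
    -- set up the extended rational system
    set M : (Fin d ⊕ Fin n) → (Fin n → ℚ) := Sum.elim (fun i j => (A i j : ℚ))
      (fun k j => if x k = 0 then (if k = j then 1 else 0) else 0) with hM
    set v' : (Fin d ⊕ Fin n) → ℚ := Sum.elim (fun i => (b i : ℚ)) (fun _ => 0) with hv'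
    have hxcons : ∀ i ∈ (Finset.univ : Finset (Fin d ⊕ Fin n)),
        ∑ j, (M i j : ℝ) * x j = (v' i : ℝ) := by
      rintro (i | k) -
      · simpa [hM, hv'] using hxA i
      · by_cases hk : x k = 0
        · have hrow : ∀ j, ((M (Sum.inr k) j : ℚ) : ℝ) * x j = if k = j then x j else 0 := by
            intro j
            simp only [hM, Sum.elim_inr, hk, if_true]
            split_ifs <;> simp
          rw [Finset.sum_congr rfl fun j _ => hrow j]
          simp [hv', Finset.sum_ite_eq, hk]
        · simp [hM, hv', hk]
    -- choose the tolerance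
    set gap : ℝ := (∑ j, c j * (ω j : ℝ)) - ∑ j, c j * x j with hgapdef
    have hgap : 0 < gap := sub_pos.mpr hvlt
    set Cc : ℝ := ∑ j, |c j| with hCc
    have hCc0 : 0 ≤ Cc := Finset.sum_nonneg fun j _ => abs_nonneg _
    set gap' : ℝ := gap / (Cc + 1) with hgap'def
    have hgap' : 0 < gap' := div_pos hgap (by linarith)
    set sε : Finset ℝ := insert gap' (Finset.univ.image fun j => if 0 < x j then x j else gap')
      with hsε
    have hsεne : sε.Nonempty := ⟨gap', Finset.mem_insert_self _ _⟩
    set ε : ℝ := sε.min' hsεne with hεdef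
    have hε0 : 0 < ε := by
      rw [hεdef]
      rw [Finset.lt_min'_iff]
      intro r hr
      rcases Finset.mem_insert.mp hr with rfl | hr
      · exact hgap'
      · obtain ⟨j, -, rfl⟩ := Finset.mem_image.mp hr
        split_ifs with h
        · exact h
        · exact hgap'
    have hεgap' : ε ≤ gap' := Finset.min'_le _ _ (Finset.mem_insert_self _ _)
    have hεx : ∀ j, 0 < x j → ε ≤ x j := by
      intro j hj
      have hm : x j ∈ sε := by
        refine Finset.mem_insert_of_mem (Finset.mem_image.mpr ⟨j, Finset.mem_univ j, ?_⟩)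
        rw [if_pos hj]
      exact Finset.min'_le _ _ hm
    obtain ⟨q, hq, hqnear⟩ := densAux M v' Finset.univ x hxcons ε hε0
    have hq0 : ∀ j, q j = 0 ∨ 0 < x j := by
      intro j
      by_cases hj : x j = 0
      · left
        have := hq (Sum.inr j) (Finset.mem_univ _)
        simpa [hM, hv', hj, Finset.sum_ite_eq] using this
      · right
        exact lt_of_le_of_ne (hx0 j) (Ne.symm hj)
    refine ⟨q, ?_, ?_, ?_⟩
    · intro j
      rcases hq0 j with h | h
      · rw [h]
      · have h1 : ε ≤ x j := hεx j h
        have h2 := hqnear j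
        have : (0:ℝ) < (q j : ℝ) := by
          have := abs_lt.mp h2
          linarith
        exact_mod_cast this.le
    · intro i
      exact hq (Sum.inl i) (Finset.mem_univ _)
    · have hsum : ∑ j, c j * ((q j : ℚ) : ℝ) - ∑ j, c j * x j
          = ∑ j, c j * (((q j : ℚ) : ℝ) - x j) := by
        rw [← Finset.sum_sub_distrib]
        congr 1; ext j; ring
      have hbound : ∑ j, c j * (((q j : ℚ) : ℝ) - x j) ≤ Cc * ε := by
        rw [hCc, Finset.sum_mul]
        apply Finset.sum_le_sum
        intro j _
        calc c j * (((q j : ℚ) : ℝ) - x j) ≤ |c j * (((q j : ℚ) : ℝ) - x j)| := le_abs_self _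
          _ = |c j| * |((q j : ℚ) : ℝ) - x j| := abs_mul _ _
          _ ≤ |c j| * ε := mul_le_mul_of_nonneg_left (hqnear j).le (abs_nonneg _)
      have hfinal : Cc * ε < gap := by
        calc Cc * ε ≤ Cc * gap' := mul_le_mul_of_nonneg_left hεgap' hCc0
          _ < (Cc + 1) * gap' := by nlinarith
          _ = gap := by rw [hgap'def]; field_simp
      rw [hgapdef] at hfinal
      linarith
  -- one improvement step
  have step : ∀ ω : Fin n → ℕ, (∀ i, ∑ j, A i j * (ω j : ℤ) = b i) →
      L < ∑ j, c j * (ω j : ℝ) →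
      ∃ ω2 : Fin n → ℕ, (∀ i, ∑ j, A i j * (ω2 j : ℤ) = b i) ∧
        ∑ j, c j * (ω2 j : ℝ) ≤ (∑ j, c j * (ω j : ℝ)) - δ := by
    intro ω hωA hωv
    obtain ⟨q, hq0, hqA, hqc⟩ := key ω hωv
    -- clear denominators
    set D : ℕ := ∏ j, (q j).den with hD
    have hD0 : 0 < D := Finset.prod_pos fun j _ => (q j).pos
    have hdvd : ∀ j, (q j).den ∣ D := fun j => Finset.dvd_prod_of_mem _ (Finset.mem_univ j)
    set α : Fin n → ℕ := fun j => (q j).num.toNat * (D / (q j).den) with hα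
    have hαq : ∀ j, ((α j : ℕ) : ℚ) = q j * D := by
      intro j
      have hden : ((q j).den : ℚ) ≠ 0 := Nat.cast_ne_zero.mpr (q j).den_nz
      have hnum : ((q j).num.toNat : ℚ) = ((q j).num : ℚ) := by
        have := Int.toNat_of_nonneg (Rat.num_nonneg.mpr (hq0 j))
        exact_mod_cast this
      have hmul : ((q j).num : ℚ) = q j * ((q j).den : ℚ) :=
        (div_eq_iff hden).mp (Rat.num_div_den (q j))
      have hDden : ((q j).den : ℚ) * ((D / (q j).den : ℕ) : ℚ) = (D : ℚ) := by
        rw [← Nat.cast_mul, Nat.mul_div_cancel' (hdvd j)]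
      calc ((α j : ℕ) : ℚ) = ((q j).num.toNat : ℚ) * ((D / (q j).den : ℕ) : ℚ) := by
            rw [hα]; push_cast; ring
        _ = q j * (D : ℚ) := by rw [hnum, hmul, mul_assoc, hDden]
    have hαA : ∀ i, ∑ j, A i j * (α j : ℤ) = D * b i := by
      intro i
      have h2 : ((∑ j, A i j * ((α j : ℕ) : ℤ) : ℤ) : ℚ) = ((D * b i : ℤ) : ℚ) := by
        push_cast
        calc ∑ j, (A i j : ℚ) * ((α j : ℕ) : ℚ)
            = ∑ j, (A i j : ℚ) * (q j * D) :=
              Finset.sum_congr rfl fun j _ => by rw [hαq j]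
          _ = (∑ j, (A i j : ℚ) * q j) * D := by
              rw [Finset.sum_mul]; congr 1; ext j; ring
          _ = (D : ℚ) * (b i : ℚ) := by rw [hqA i]; ring
      exact_mod_cast h2
    have hD0R : (0:ℝ) < (D:ℝ) := by exact_mod_cast hD0
    have hαc : ∑ j, c j * ((α j : ℕ) : ℝ) < ∑ j, c j * ((D * ω j : ℕ) : ℝ) := by
      have hl : ∀ j, ((α j : ℕ) : ℝ) = ((q j : ℚ) : ℝ) * (D : ℝ) := by
        intro j
        have h3 : (((α j : ℕ) : ℚ) : ℝ) = ((q j * D : ℚ) : ℝ) := by rw [hαq j]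
        push_cast at h3
        exact_mod_cast h3
      calc ∑ j, c j * ((α j : ℕ) : ℝ) = (∑ j, c j * ((q j : ℚ) : ℝ)) * (D:ℝ) := by
            rw [Finset.sum_mul]
            exact Finset.sum_congr rfl fun j _ => by rw [hl j]; ring
        _ < (∑ j, c j * (ω j : ℝ)) * (D:ℝ) := mul_lt_mul_of_pos_right hqc hD0R
        _ = ∑ j, c j * ((D * ω j : ℕ) : ℝ) := by
            rw [Finset.sum_mul]
            refine Finset.sum_congr rfl fun j _ => ?_
            push_cast
            ring
    have hαA2 : ∀ i, ∑ j, A i j * ((α j : ℕ) : ℤ) = ∑ j, A i j * (((D * ω j : ℕ)) : ℤ) := by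
      intro i
      rw [hαA i]
      calc (D:ℤ) * b i = (D:ℤ) * ∑ j, A i j * (ω j : ℤ) := by rw [hωA i]
        _ = ∑ j, A i j * (((D * ω j : ℕ)) : ℤ) := by
            rw [Finset.mul_sum]
            refine Finset.sum_congr rfl fun j _ => ?_
            push_cast
            ring
    obtain ⟨t, htT, htle⟩ := hTest (fun j => D * ω j) (fun j => D * ω j) (fun i => rfl)
      ⟨α, hαA2, hαc⟩
    have htω : ∀ j, t j ≤ (ω j : ℤ) := by
      intro j
      rcases Nat.eq_zero_or_pos (ω j) with h0 | h1
      · have h4 := htle j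
        rw [h0] at h4 ⊢
        simpa using h4
      · exact le_trans ((hT t htT).2.2 j) (by exact_mod_cast h1)
    set ω2 : Fin n → ℕ := fun j => ((ω j : ℤ) - t j).toNat with hω2
    have hω2c : ∀ j, ((ω2 j : ℕ) : ℤ) = (ω j : ℤ) - t j :=
      fun j => Int.toNat_of_nonneg (sub_nonneg.mpr (htω j))
    refine ⟨ω2, ?_, ?_⟩
    · intro i
      calc ∑ j, A i j * (ω2 j : ℤ) = ∑ j, A i j * ((ω j : ℤ) - t j) :=
            Finset.sum_congr rfl fun j _ => by rw [hω2c j]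
        _ = (∑ j, A i j * (ω j : ℤ)) - ∑ j, A i j * t j := by
            rw [← Finset.sum_sub_distrib]
            congr 1; ext j; ring
        _ = b i := by rw [hωA i, (hT t htT).1 i, sub_zero]
    · have hval : ∑ j, c j * (ω2 j : ℝ) = (∑ j, c j * (ω j : ℝ)) - ∑ j, c j * ((t j : ℤ) : ℝ) := by
        rw [← Finset.sum_sub_distrib]
        refine Finset.sum_congr rfl fun j _ => ?_
        have h5 : ((ω2 j : ℕ) : ℝ) = (ω j : ℝ) - ((t j : ℤ) : ℝ) := by exact_mod_cast hω2c j
        rw [h5]; ring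
      rw [hval]
      have := hδle t htT
      linarith
  -- descent
  have desc : ∀ N : ℕ, ∀ ω : Fin n → ℕ, (∀ i, ∑ j, A i j * (ω j : ℤ) = b i) →
      (∑ j, c j * (ω j : ℝ)) < L + N * δ →
      ∃ ω₀ : Fin n → ℕ, (∀ i, ∑ j, A i j * (ω₀ j : ℤ) = b i) ∧
        ∑ j, c j * (ω₀ j : ℝ) ≤ L := by
    intro N
    induction N with
    | zero =>
        intro ω hωA hωv
        exfalso
        have := hL_le ω hωA
        push_cast at hωv
        linarith
    | succ N IH =>
        intro ω hωA hωv
        by_cases hc : ∑ j, c j * (ω j : ℝ) ≤ L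
        · exact ⟨ω, hωA, hc⟩
        · push_neg at hc
          obtain ⟨ω2, hω2A, hω2v⟩ := step ω hωA hc
          apply IH ω2 hω2A
          push_cast at hωv ⊢
          linarith
  obtain ⟨N, hN⟩ := exists_nat_gt ((∑ j, c j * (u₀ j : ℝ) - L) / δ)
  have hNv : ∑ j, c j * (u₀ j : ℝ) < L + N * δ := by
    rw [div_lt_iff₀ hδ0] at hN
    linarith
  obtain ⟨ω₀, hω₀A, hω₀v⟩ := desc N u₀ hu₀ hNv
  have h1 : sInf IP ≤ L := le_trans (csInf_le hbddIP ⟨ω₀, hω₀A, rfl⟩) hω₀v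
  have h2 : L ≤ sInf IP := csInf_le_csInf hbddLP hIPne hsub
  exact le_antisymm h1 h2
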